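/- Let α > 1 be a real number and let d : ℝ³ × ℝ³ → [0,∞) be a quasi-distance on ℝ³ that is left-invariant for the Heisenberg group law, self-similar (there exists λ₀ ∈ (0,1) with d(δ_{λ₀}(p), δ_{λ₀}(q)) = λ₀·d(p,q) for all p, q, where δ_λ(x,y,z) := (λx, λ^α y, λ^{α+1} z)), continuous on ℝ³ × ℝ³ for the standard topology, and such that (ℝ³, d) satisfies the Weak Besicovitch Covering Property. Then for every p ∈ ℝ³ with d(0,p) ≤ 1 and every λ̄ > 0, there exists λ with 0 < λ < λ̄ such that d(0, p·δ_λ(p⁻¹)) ≤ 1. -/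
import Mathlib


/-- The first Heisenberg group law on `ℝ³`. -/
noncomputable def hmul (p q : ℝ × ℝ × ℝ) : ℝ × ℝ × ℝ :=
  (p.1 + q.1, p.2.1 + q.2.1, p.2.2 + q.2.2 + (p.1 * q.2.1 - p.2.1 * q.1) / 2)

/-- The group inverse for the Heisenberg group law. -/
noncomputable def hinv (p : ℝ × ℝ × ℝ) : ℝ × ℝ × ℝ := (-p.1, -p.2.1, -p.2.2)

/-- The dilations of the non-standard grading of exponent `α` on the first Heisenberg
group: `δ_l(x,y,z) = (l·x, l^α·y, l^(α+1)·z)`. -/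
noncomputable def hdil (α l : ℝ) (p : ℝ × ℝ × ℝ) : ℝ × ℝ × ℝ :=
  (l * p.1, l ^ α * p.2.1, l ^ (α + 1) * p.2.2)

/-- The closed ball of center `p` and radius `r` for a distance-like function `d`. -/
def QBall {X : Type*} (d : X → X → ℝ) (p : X) (r : ℝ) : Set X := {q | d q p ≤ r}

/-- A quasi-distance. -/
def IsQuasiDist {X : Type*} (d : X → X → ℝ) : Prop :=
  (∀ p q, 0 ≤ d p q) ∧ (∀ p q, d p q = d q p) ∧ (∀ p q, d p q = 0 ↔ p = q) ∧
    ∃ C : ℝ, 1 ≤ C ∧ ∀ p p' q, d p q ≤ C * (d p p' + d p' q)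

/-- A family of Besicovitch balls. -/
def IsBesicovitchFamily {X : Type*} (d : X → X → ℝ) (s : Finset X) (r : X → ℝ) : Prop :=
  (∀ x ∈ s, 0 < r x) ∧ (∀ x ∈ s, ∀ y ∈ s, x ≠ y → x ∉ QBall d y (r y)) ∧
    ∃ z, ∀ x ∈ s, z ∈ QBall d x (r x)

/-- The Weak Besicovitch Covering Property. -/
def HasWBCP {X : Type*} (d : X → X → ℝ) : Prop :=
  ∃ Q : ℕ, 1 ≤ Q ∧ ∀ (s : Finset X) (r : X → ℝ), IsBesicovitchFamily d s r → s.card ≤ Q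

lemma hdil_zero' (α l : ℝ) : hdil α l 0 = 0 := by
  simp [hdil]

lemma hdil_one' (α : ℝ) (p : ℝ × ℝ × ℝ) : hdil α 1 p = p := by
  simp [hdil]

lemma hdil_comp' (α : ℝ) {s t : ℝ} (hs : 0 ≤ s) (ht : 0 ≤ t) (p : ℝ × ℝ × ℝ) :
    hdil α s (hdil α t p) = hdil α (s * t) p := by
  unfold hdil
  rw [Real.mul_rpow hs ht, Real.mul_rpow hs ht]
  exact Prod.ext (by ring) (Prod.ext (by ring) (by ring))

lemma hmul_zero_right' (p : ℝ × ℝ × ℝ) : hmul p 0 = p := by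
  simp [hmul]

lemma hmul_inv_cancel_left' (p x : ℝ × ℝ × ℝ) : hmul (hinv p) (hmul p x) = x := by
  unfold hmul hinv
  exact Prod.ext (by dsimp; ring) (Prod.ext (by dsimp; ring) (by dsimp; ring))

lemma hmul_inv_self' (p : ℝ × ℝ × ℝ) : hmul p (hinv p) = 0 := by
  unfold hmul hinv
  refine Prod.ext (by dsimp; ring) (Prod.ext (by dsimp; ring) ?_)
  show _ = (0 : ℝ)
  dsimp; ring

/-- Under the hypotheses of Theorem 6.7 (continuous self-similar quasi-distance on the
non-standard Heisenberg group of exponent `α > 1` satisfying WBCP), for every point `p`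
of the unit ball and every `λ̄ > 0` there is `0 < λ < λ̄` with `p·δ_λ(p⁻¹)` in the unit
ball. -/
theorem statement18 (α : ℝ) (hα : 1 < α)
    (d : (ℝ × ℝ × ℝ) → (ℝ × ℝ × ℝ) → ℝ)
    (hd : IsQuasiDist d)
    (hinvL : ∀ p q q', d (hmul p q) (hmul p q') = d q q')
    (hss : ∃ l₀ : ℝ, 0 < l₀ ∧ l₀ < 1 ∧
      ∀ p q, d (hdil α l₀ p) (hdil α l₀ q) = l₀ * d p q)
    (hcont : Continuous (fun pq : (ℝ × ℝ × ℝ) × (ℝ × ℝ × ℝ) => d pq.1 pq.2))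
    (hwbcp : HasWBCP d) :
    ∀ p : ℝ × ℝ × ℝ, d 0 p ≤ 1 → ∀ lb : ℝ, 0 < lb →
      ∃ l : ℝ, 0 < l ∧ l < lb ∧ d 0 (hmul p (hdil α l (hinv p))) ≤ 1 := by
  intro p hp lb hlb
  by_contra hcon
  push_neg at hcon
  obtain ⟨hnn, hsymm, hzero, C, hC, htri⟩ := hd
  obtain ⟨l₀, hl₀0, hl₀1, hssl⟩ := hss
  obtain ⟨Q, hQ1, hQ⟩ := hwbcp
  set q := hinv p with hqdef
  -- rewrite the distance using left invariance
  have hrewrite : ∀ l : ℝ, d q (hdil α l q) = d 0 (hmul p (hdil α l q)) := by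
    intro l
    have h := hinvL q 0 (hmul p (hdil α l q))
    rwa [hmul_zero_right', hqdef, hmul_inv_cancel_left'] at h
  have hbig : ∀ l : ℝ, 0 < l → l < lb → 1 < d q (hdil α l q) := by
    intro l h1 h2
    rw [hrewrite]
    exact hcon l h1 h2
  -- d 0 q ≤ 1
  have hq1 : d 0 q ≤ 1 := by
    have h := hinvL p 0 (hinv p)
    rw [hmul_zero_right', hmul_inv_self'] at h
    rw [hqdef, ← h, hsymm]
    exact hp
  -- q ≠ 0 and d 0 q > 0
  have hqne : q ≠ 0 := by
    intro h
    have h1 := hbig (lb / 2) (by positivity) (by linarith)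
    rw [h, hdil_zero'] at h1
    have h2 : d (0 : ℝ × ℝ × ℝ) 0 = 0 := (hzero 0 0).mpr rfl
    linarith
  have hD : 0 < d 0 q := by
    rcases lt_or_eq_of_le (hnn 0 q) with h | h
    · exact h
    · exact absurd ((hzero 0 q).mp h.symm).symm hqne
  -- iterated self-similarity
  have ss_pow : ∀ n : ℕ, ∀ a b, d (hdil α (l₀ ^ n) a) (hdil α (l₀ ^ n) b)
      = l₀ ^ n * d a b := by
    intro n
    induction n with
    | zero => intro a b; simp [hdil_one']
    | succ n ih =>
      intro a b
      rw [pow_succ', ← hdil_comp' α hl₀0.le (pow_nonneg hl₀0.le n) a,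
        ← hdil_comp' α hl₀0.le (pow_nonneg hl₀0.le n) b, hssl, ih]
      ring
  -- choose the dilation factor
  obtain ⟨M, hM⟩ : ∃ M : ℕ, l₀ ^ M < lb := exists_pow_lt_of_lt_one hlb hl₀1
  set lam := l₀ ^ (M + 1) with hlamdef
  have hlam0 : 0 < lam := pow_pos hl₀0 _
  have hlam1 : lam < 1 := pow_lt_one₀ hl₀0.le hl₀1 (Nat.succ_ne_zero M)
  have hlamlb : lam < lb := by
    have : lam ≤ l₀ ^ M := pow_le_pow_of_le_one hl₀0.le hl₀1.le (Nat.le_succ M)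
    linarith
  have ss_lam : ∀ k : ℕ, ∀ a b, d (hdil α (lam ^ k) a) (hdil α (lam ^ k) b)
      = lam ^ k * d a b := by
    intro k a b
    rw [hlamdef, ← pow_mul]
    exact ss_pow _ a b
  set f : ℕ → ℝ × ℝ × ℝ := fun k => hdil α (lam ^ k) q with hfdef
  have hrf : ∀ k : ℕ, d 0 (f k) = lam ^ k * d 0 q := by
    intro k
    have h := ss_lam k 0 q
    rwa [hdil_zero'] at h
  -- key separation estimate
  have key : ∀ m n : ℕ, m < n → lam ^ m * d 0 q < d (f m) (f n) := by
    intro m n hmn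
    have hfn : f n = hdil α (lam ^ m) (hdil α (lam ^ (n - m)) q) := by
      rw [hdil_comp' α (pow_nonneg hlam0.le m) (pow_nonneg hlam0.le (n - m)),
        ← pow_add, Nat.add_sub_cancel' hmn.le]
    have hsub1 : 1 ≤ n - m := by omega
    have hle : lam ^ (n - m) ≤ lam := by
      calc lam ^ (n - m) ≤ lam ^ 1 := pow_le_pow_of_le_one hlam0.le hlam1.le hsub1
        _ = lam := pow_one lam
    have hbigd : 1 < d q (hdil α (lam ^ (n - m)) q) :=
      hbig _ (pow_pos hlam0 _) (lt_of_le_of_lt hle hlamlb)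
    have heq : d (f m) (f n) = lam ^ m * d q (hdil α (lam ^ (n - m)) q) := by
      rw [hfn]
      exact ss_lam m q _
    rw [heq]
    have hpm : 0 < lam ^ m := pow_pos hlam0 m
    nlinarith
  -- the Besicovitch family
  set s : Finset (ℝ × ℝ × ℝ) := (Finset.range (Q + 1)).image f with hsdef
  have hinj : Set.InjOn f (Finset.range (Q + 1)) := by
    intro m hm n hn hmn
    by_contra hne
    rcases Nat.lt_or_ge m n with h | h
    · have h1 := key m n h
      rw [hmn] at h1
      have h2 : d (f n) (f n) = 0 := (hzero _ _).mpr rfl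
      have := pow_pos hlam0 m
      nlinarith
    · have h' : n < m := by omega
      have h1 := key n m h'
      rw [hmn] at h1
      have h2 : d (f n) (f n) = 0 := (hzero _ _).mpr rfl
      have := pow_pos hlam0 n
      nlinarith
  have hcard : s.card = Q + 1 := by
    rw [hsdef, Finset.card_image_of_injOn hinj, Finset.card_range]
  have hbes : IsBesicovitchFamily d s (fun x => d 0 x) := by
    refine ⟨?_, ?_, 0, ?_⟩
    · intro x hx
      obtain ⟨k, _, rfl⟩ := Finset.mem_image.mp hx
      show 0 < d 0 (f k)
      rw [hrf]
      positivity
    · intro x hx y hy hne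
      obtain ⟨m, _, rfl⟩ := Finset.mem_image.mp hx
      obtain ⟨n, _, rfl⟩ := Finset.mem_image.mp hy
      intro hmem
      simp only [QBall, Set.mem_setOf_eq] at hmem
      rw [hrf] at hmem
      rcases lt_trichotomy m n with h | h | h
      · have h1 := key m n h
        have h2 : lam ^ n ≤ lam ^ m := pow_le_pow_of_le_one hlam0.le hlam1.le h.le
        nlinarith
      · exact hne (by rw [h])
      · have h1 := key n m h
        rw [hsymm] at hmem
        nlinarith
    · intro x hx
      obtain ⟨k, _, rfl⟩ := Finset.mem_image.mp hx
      show d 0 (f k) ≤ d 0 (f k)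
      exact le_refl _
  have := hQ s _ hbes
  omega
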